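/- Let k be a field of characteristic zero, A a commutative k-algebra, and G a finite group acting on A by k-algebra automorphisms. For every A^G-module N, the canonical A^G-linear map N → (A ⊗_{A^G} N)^G, x ↦ 1 ⊗ x, is an isomorphism, where G acts on A ⊗_{A^G} N through the factor A. -/
import Mathlib


/-!
STATEMENT 6: for a field `k` of characteristic zero, a commutative
`k`-algebra `A`, and a finite group `G` acting on `A` by `k`-algebra
automorphisms, the canonical map `N → (A ⊗[Aᴳ] N)ᴳ`, `x ↦ 1 ⊗ x`, is an
isomorphism for every `Aᴳ`-module `N` (`G` acting on `A ⊗[Aᴳ] N` through the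
factor `A`); i.e. the functor `π_*^G ∘ π^*` is the identity.
-/

open TensorProduct

universe u v

/-- The invariant subalgebra `Aᴳ` of the `G`-action on the `k`-algebra `A`. -/
def invAlg (k : Type*) (A : Type u) (G : Type*) [CommSemiring k] [CommRing A]
    [Algebra k A] [Group G] [MulSemiringAction G A] [SMulCommClass G k A] :
    Subalgebra k A where
  carrier := {a | ∀ g : G, g • a = a}
  mul_mem' := fun ha hb g => by rw [smul_mul', ha g, hb g]
  add_mem' := fun ha hb g => by rw [smul_add, ha g, hb g]
  algebraMap_mem' := fun c g => by
    rw [Algebra.algebraMap_eq_smul_one, smul_comm, smul_one]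

section

variable (k : Type*) [Field k] (A : Type u) [CommRing A] [Algebra k A]
variable (G : Type*) [Group G] [MulSemiringAction G A] [SMulCommClass G k A]
variable (N : Type v) [AddCommGroup N] [Module (invAlg k A G) N]

set_option synthInstance.maxHeartbeats 1000000 in
/-- The action of `g : G` on `A ⊗[Aᴳ] N` through the factor `A`. -/
noncomputable def gAct (g : G) :
    (A ⊗[invAlg k A G] N) →+ (A ⊗[invAlg k A G] N) :=
  TensorProduct.liftAddHom
    { toFun := fun a =>
        { toFun := fun x => (g • a) ⊗ₜ[invAlg k A G] x
          map_zero' := TensorProduct.tmul_zero _ _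
          map_add' := fun x y => TensorProduct.tmul_add _ _ _ }
      map_zero' := by ext x; simp
      map_add' := fun a b => by ext x; simp [smul_add, TensorProduct.add_tmul] }
    (fun c a x => by
      simp only [AddMonoidHom.coe_mk, ZeroHom.coe_mk]
      have h : g • ((c : invAlg k A G) • a) = (c : invAlg k A G) • (g • a) := by
        rw [Algebra.smul_def, smul_mul', Algebra.smul_def]
        congr 1
        exact c.2 g
      rw [h, ← TensorProduct.smul_tmul', TensorProduct.tmul_smul])

section Reynolds

variable [Fintype G]

/-- The (unnormalized) Reynolds operator `a ↦ ∑ g, g • a`, viewed as an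
`Aᴳ`-linear map `A → Aᴳ`. -/
noncomputable def reynolds : A →ₗ[invAlg k A G] invAlg k A G where
  toFun a := ⟨∑ g : G, g • a, fun h => by
    rw [Finset.smul_sum]
    exact Fintype.sum_equiv (Equiv.mulLeft h) _ _
      (fun g => by simp [mul_smul])⟩
  map_add' a b := by
    ext
    simp [smul_add, Finset.sum_add_distrib]
  map_smul' c a := by
    ext
    have : ∀ g : G, g • (c • a) = c • (g • a) := fun g => by
      rw [Algebra.smul_def, smul_mul', Algebra.smul_def]
      congr 1
      exact c.2 g
    simp only [this, RingHom.id_apply]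
    simp only [Algebra.smul_def, Finset.mul_sum, Algebra.algebraMap_self_apply,
      Subalgebra.coe_mul]
    rfl

/-- Contraction `A ⊗[Aᴳ] N → N` induced by the Reynolds operator. -/
noncomputable def reynoldsContract : A ⊗[invAlg k A G] N →ₗ[invAlg k A G] N :=
  TensorProduct.lift ((LinearMap.lsmul (invAlg k A G) N) ∘ₗ reynolds k A G)

lemma reynoldsContract_tmul (a : A) (x : N) :
    reynoldsContract k A G N (a ⊗ₜ[invAlg k A G] x) = reynolds k A G a • x :=
  rfl

set_option synthInstance.maxHeartbeats 1000000 in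
lemma sum_gAct_tmul (a : A) (x : N) :
    (∑ g : G, gAct k A G N g) (a ⊗ₜ[invAlg k A G] x)
      = (1 : A) ⊗ₜ[invAlg k A G] (reynolds k A G a • x) := by
  rw [AddMonoidHom.finset_sum_apply]
  have h1 : ∀ g : G, gAct k A G N g (a ⊗ₜ[invAlg k A G] x)
      = (g • a) ⊗ₜ[invAlg k A G] x := fun g => by
    simp [gAct]
  simp only [h1]
  rw [← TensorProduct.sum_tmul]
  have h2 : (∑ g : G, g • a) = reynolds k A G a • (1 : A) := by
    rw [Algebra.smul_def, mul_one]; rfl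
  rw [h2, ← TensorProduct.smul_tmul', TensorProduct.tmul_smul]

lemma sum_gAct_mem_range (t : A ⊗[invAlg k A G] N) :
    ∃ y : N, (∑ g : G, gAct k A G N g) t = (1 : A) ⊗ₜ[invAlg k A G] y := by
  induction t using TensorProduct.induction_on with
  | zero => exact ⟨0, by simp⟩
  | tmul a x => exact ⟨reynolds k A G a • x, sum_gAct_tmul k A G N a x⟩
  | add t t' ht ht' =>
      obtain ⟨y, hy⟩ := ht
      obtain ⟨y', hy'⟩ := ht'
      exact ⟨y + y', by rw [map_add, hy, hy', TensorProduct.tmul_add]⟩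

lemma card_unit [CharZero k] :
    (algebraMap k (invAlg k A G) (((Fintype.card G : ℕ) : k)⁻¹)) *
      ((Fintype.card G : ℕ) : invAlg k A G) = 1 := by
  have hn : ((Fintype.card G : ℕ) : invAlg k A G)
      = algebraMap k (invAlg k A G) ((Fintype.card G : ℕ) : k) := by
    simp
  rw [hn, ← map_mul, inv_mul_cancel₀, map_one]
  exact_mod_cast Fintype.card_ne_zero

omit [Fintype G] in
set_option synthInstance.maxHeartbeats 1000000 in
lemma one_tmul_smul (c : invAlg k A G) (y : N) :
    (1 : A) ⊗ₜ[invAlg k A G] (c • y)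
      = c • ((1 : A) ⊗ₜ[invAlg k A G] y) :=
  TensorProduct.tmul_smul ..

end Reynolds

/-- **`π_*^G ∘ π^* ≅ id`** (affine finite-group case): for every `Aᴳ`-module
`N` the canonical map `N → (A ⊗[Aᴳ] N)ᴳ`, `x ↦ 1 ⊗ x`, is bijective. -/
theorem canonical_map_to_invariants_of_baseChange_bijective
    [CharZero k] [Finite G] :
    Function.Bijective
      (fun x : N =>
        (⟨(1 : A) ⊗ₜ[invAlg k A G] x, fun g => by
            simp only [gAct, TensorProduct.liftAddHom_tmul, AddMonoidHom.coe_mk,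
              ZeroHom.coe_mk, smul_one]⟩ :
          {t : A ⊗[invAlg k A G] N // ∀ g : G, gAct k A G N g t = t})) := by
  cases nonempty_fintype G
  set n : invAlg k A G := ((Fintype.card G : ℕ) : invAlg k A G) with hn
  set c : invAlg k A G :=
    algebraMap k (invAlg k A G) (((Fintype.card G : ℕ) : k)⁻¹) with hc
  have hcn : c * n = 1 := card_unit k A G
  constructor
  · intro x x' h
    have h' : (1 : A) ⊗ₜ[invAlg k A G] x = (1 : A) ⊗ₜ[invAlg k A G] x' :=
      congrArg Subtype.val h
    have h2 := congrArg (reynoldsContract k A G N) h'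
    rw [reynoldsContract_tmul, reynoldsContract_tmul] at h2
    have hr : reynolds k A G (1 : A) = n := by
      ext
      simp [reynolds, hn]
    rw [hr] at h2
    calc x = (c * n) • x := by rw [hcn, one_smul]
    _ = c • (n • x) := mul_smul _ _ _
    _ = c • (n • x') := by rw [h2]
    _ = x' := by rw [← mul_smul, hcn, one_smul]
  · rintro ⟨t, ht⟩
    obtain ⟨y, hy⟩ := sum_gAct_mem_range k A G N t
    have hsum : (∑ g : G, gAct k A G N g) t = (Fintype.card G) • t := by
      rw [AddMonoidHom.finset_sum_apply]
      simp [ht, Finset.sum_const, Finset.card_univ]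
    have hnt : n • t = (1 : A) ⊗ₜ[invAlg k A G] y := by
      rw [hn, Nat.cast_smul_eq_nsmul, ← hsum, hy]
    refine ⟨c • y, Subtype.ext ?_⟩
    show (1 : A) ⊗ₜ[invAlg k A G] (c • y) = t
    calc (1 : A) ⊗ₜ[invAlg k A G] (c • y)
        = c • ((1 : A) ⊗ₜ[invAlg k A G] y) := one_tmul_smul k A G N c y
    _ = c • (n • t) := by rw [hnt]
    _ = (c * n) • t := (mul_smul _ _ _).symm
    _ = t := by rw [hcn, one_smul]

end
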